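/- Let μ be a homogeneous S-valued measure on 𝔹 with trinary spectrum Σ, and let a, b be proper elements of 𝔹. Then there exists φ ∈ Aut(μ) with φ(a)∧b = b and φ(a) ≠ b if and only if there exists x ∈ S such that (μ(b), x, μ(1∖a)) ∈ Σ, x + μ(b) = μ(a), and x + μ(1∖a) = μ(1∖b). -/
import Mathlib


variable {B : Type*} [BooleanAlgebra B] {S : Type*} [AddCommMonoid S]

/-- An `S`-valued finitely additive measure on the Boolean algebra `B`. -/
def IsBAMeasure (μ : B → S) : Prop :=
  μ ⊥ = 0 ∧ ∀ a b : B, Disjoint a b → μ (a ⊔ b) = μ a + μ b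

/-- An element is proper if it differs from `⊥` and `⊤`. -/
def IsProperElem (a : B) : Prop := a ≠ ⊥ ∧ a ≠ ⊤

/-- `{a, b, c}` is a partition of `B` into three nonzero pairwise disjoint pieces. -/
def IsPartition3 (a b c : B) : Prop :=
  a ≠ ⊥ ∧ b ≠ ⊥ ∧ c ≠ ⊥ ∧ Disjoint a b ∧ Disjoint a c ∧ Disjoint b c ∧ a ⊔ b ⊔ c = ⊤

/-- A Boolean automorphism `φ` preserves the measure `μ`. -/
def PreservesMeas (μ : B → S) (φ : B ≃o B) : Prop := ∀ x : B, μ (φ x) = μ x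

/-- `μ` is homogeneous: every partial `μ`-isomorphism on a 4-element subalgebra
(equivalently, determined by proper `a ↦ b` with `μ a = μ b`, `μ aᶜ = μ bᶜ`)
extends to a `μ`-automorphism. -/
def MeasHomogeneous (μ : B → S) : Prop :=
  ∀ a b : B, IsProperElem a → IsProperElem b → μ a = μ b → μ aᶜ = μ bᶜ →
    ∃ φ : B ≃o B, PreservesMeas μ φ ∧ φ a = b

/-- The 4 elements property (4EP). -/
def MeasHas4EP (μ : B → S) : Prop :=
  ∀ a b c d : B, IsPartition3 a b c → μ a + μ b = μ d → μ c = μ dᶜ →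
    ∃ p q : B, IsProperElem p ∧ IsProperElem q ∧ Disjoint p q ∧
      μ p = μ a ∧ μ q = μ b ∧ p ⊔ q = d

/-- The trinary spectrum of a measure. -/
def TrinarySpectrum (μ : B → S) : Set (S × S × S) :=
  {t | ∃ a b c : B, IsPartition3 a b c ∧ t = (μ a, μ b, μ c)}

/-- An order isomorphism of Boolean algebras preserves complements. -/
lemma orderIso_map_compl (φ : B ≃o B) (x : B) : φ xᶜ = (φ x)ᶜ := by
  have h : IsCompl (φ x) (φ xᶜ) := by
    constructor
    · rw [disjoint_iff, ← φ.map_inf, inf_compl_eq_bot, φ.map_bot]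
    · rw [codisjoint_iff, ← φ.map_sup, sup_compl_eq_top, φ.map_top]
  exact h.compl_eq.symm

/-- for proper `a`, `b`, there is `φ ∈ Aut(μ)` with `b` strictly
below `φ a` iff there is `x ∈ S` with `(μ b, x, μ aᶜ) ∈ Σ(μ)`,
`x + μ b = μ a` and `x + μ aᶜ = μ bᶜ`. -/
theorem strictly_below_iff_spectrum [Countable B] [Nontrivial B]
    (hatomless : ∀ a : B, a ≠ ⊥ → ∃ b : B, b ≠ ⊥ ∧ b < a)
    (μ : B → S) (hμ : IsBAMeasure μ) (hhom : MeasHomogeneous μ)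
    (a b : B) (ha : IsProperElem a) (hb : IsProperElem b) :
    (∃ φ : B ≃o B, PreservesMeas μ φ ∧ φ a ⊓ b = b ∧ φ a ≠ b) ↔
    (∃ x : S, (μ b, x, μ aᶜ) ∈ TrinarySpectrum μ ∧
      x + μ b = μ a ∧ x + μ aᶜ = μ bᶜ) := by
  obtain ⟨hμ0, hμadd⟩ := hμ
  constructor
  · rintro ⟨φ, hφ, hinf, hne⟩
    have hble : b ≤ φ a := hinf.symm.le.trans inf_le_left
    set c : B := φ a \ b with hc
    have hcne : c ≠ ⊥ := by
      intro hc0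
      exact hne (le_antisymm (sdiff_eq_bot_iff.mp hc0) hble)
    have hφane : φ a ≠ ⊤ := fun h => ha.2 (φ.injective (by rw [h, φ.map_top]))
    have hdisj_bc : Disjoint b c := disjoint_sdiff_self_right
    have hdisj_bcc : Disjoint b (φ a)ᶜ := disjoint_compl_right.mono_left hble
    have hdisj_ccc : Disjoint c (φ a)ᶜ := disjoint_compl_right.mono_left sdiff_le
    have hsup : b ⊔ c = φ a := sup_sdiff_cancel_right hble
    have hpart : IsPartition3 b c (φ a)ᶜ := by
      refine ⟨hb.1, hcne, ?_, hdisj_bc, hdisj_bcc, hdisj_ccc, ?_⟩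
      · simpa using hφane
      · rw [hsup, sup_compl_eq_top]
    have hμφa : μ (φ a) = μ b + μ c := by rw [← hsup]; exact hμadd _ _ hdisj_bc
    have hμac : μ (φ a)ᶜ = μ aᶜ := by
      rw [← orderIso_map_compl φ a, hφ]
    have hcsup : c ⊔ (φ a)ᶜ = bᶜ := by
      have : IsCompl b (c ⊔ (φ a)ᶜ) := by
        constructor
        · exact Disjoint.sup_right hdisj_bc hdisj_bcc
        · rw [codisjoint_iff, ← sup_assoc, hsup, sup_compl_eq_top]
      exact this.compl_eq ▸ rfl
    refine ⟨μ c, ⟨b, c, (φ a)ᶜ, hpart, by rw [hμac]⟩, ?_, ?_⟩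
    · rw [add_comm, ← hμφa, hφ]
    · rw [← hμac, ← hμadd _ _ hdisj_ccc, hcsup]
  · rintro ⟨x, ⟨p, q, r, ⟨hp0, hq0, hr0, hpq, hpr, hqr, hsup⟩, heq⟩, hx1, hx2⟩
    obtain ⟨h1, h2, h3⟩ : μ b = μ p ∧ x = μ q ∧ μ aᶜ = μ r := by
      simpa [Prod.ext_iff] using heq
    have hpcompl : pᶜ = q ⊔ r := by
      have : IsCompl p (q ⊔ r) := by
        constructor
        · exact Disjoint.sup_right hpq hpr
        · rw [codisjoint_iff, ← sup_assoc, hsup]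
      exact this.compl_eq
    have hpqcompl : (p ⊔ q)ᶜ = r := by
      have : IsCompl (p ⊔ q) r := by
        constructor
        · exact Disjoint.sup_left hpr hqr
        · rw [codisjoint_iff, hsup]
      exact this.compl_eq
    have hpprop : IsProperElem p := by
      exact ⟨hp0, fun h => hq0 (hpq.symm.eq_bot_of_le (h ▸ le_top))⟩
    -- get ψ with ψ b = p
    have hμbcpc : μ bᶜ = μ pᶜ := by
      rw [hpcompl, hμadd _ _ hqr, ← hx2, h2, h3]
    obtain ⟨ψ, hψ, hψb⟩ := hhom b p hb hpprop h1 hμbcpc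
    have hψsymm : ∀ y, μ (ψ.symm y) = μ y := fun y => by
      rw [← hψ (ψ.symm y), ψ.apply_symm_apply]
    set a' : B := ψ.symm (p ⊔ q) with ha'
    have hba' : b ≤ a' := by
      rw [ha', ← ψ.symm_apply_apply b, hψb]
      exact ψ.symm.monotone le_sup_left
    have hba'ne : b ≠ a' := by
      intro h
      have hpq' : ψ b = p ⊔ q := by rw [h, ha', ψ.apply_symm_apply]
      rw [hψb] at hpq'
      have hqle : q ≤ p := hpq' ▸ le_sup_right
      exact hq0 (hpq.symm.eq_bot_of_le hqle)
    have ha'prop : IsProperElem a' := by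
      constructor
      · exact fun h => hb.1 (le_bot_iff.mp (h ▸ hba'))
      · intro h
        apply hr0
        have : p ⊔ q = ⊤ := by
          have := congrArg ψ h
          rwa [ha', ψ.apply_symm_apply, ψ.map_top] at this
        rw [← hpqcompl, this, compl_top]
    have hμaa' : μ a = μ a' := by
      rw [ha', hψsymm, hμadd _ _ hpq, ← h1, ← h2, add_comm, hx1]
    have hμacac' : μ aᶜ = μ a'ᶜ := by
      rw [ha', ← orderIso_map_compl, hψsymm, hpqcompl, h3]
    obtain ⟨φ, hφ, hφa⟩ := hhom a a' ha ha'prop hμaa' hμacac'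
    exact ⟨φ, hφ, by rw [hφa]; exact inf_eq_right.mpr hba',
      by rw [hφa]; exact fun h => hba'ne h.symm⟩
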